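/- Measure equivalence for composite choices: if K₁ and K₂ are pairwise incompatible sets of composite choices with ω_{K₁} = ω_{K₂}, then Σ_{κ∈K₁} ρ(κ) = Σ_{κ∈K₂} ρ(κ). -/

import Mathlib

open Finset

def Consistent {F : Type*} (κ : Finset (F × Bool)) : Prop :=
  ∀ f : F, ¬((f, true) ∈ κ ∧ (f, false) ∈ κ)

def Compatible {F : Type*} (κ : Finset (F × Bool)) (w : Finset F) : Prop :=
  ∀ f : F, ((f, true) ∈ κ → f ∈ w) ∧ ((f, false) ∈ κ → f ∉ w)

noncomputable def rhoC {F : Type*} (p : F → ℝ) (κ : Finset (F × Bool)) : ℝ :=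
  ∏ a ∈ κ, (if a.2 then p a.1 else 1 - p a.1)

def omegaC {F : Type*} (κ : Finset (F × Bool)) : Set (Finset F) :=
  {w | Compatible κ w}

def omegaK {F : Type*} (K : Finset (Finset (F × Bool))) : Set (Finset F) :=
  {w | ∃ κ ∈ K, Compatible κ w}

instance {F : Type*} [Fintype F] [DecidableEq F] (κ : Finset (F × Bool)) :
    DecidablePred (Compatible κ) := fun w =>
  decidable_of_iff (∀ f : F, ((f, true) ∈ κ → f ∈ w) ∧ ((f, false) ∈ κ → f ∉ w)) Iff.rfl

noncomputable def mu {F : Type*} [Fintype F] [DecidableEq F] (p : F → ℝ)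
    (w : Finset F) : ℝ :=
  ∏ f, (if f ∈ w then p f else 1 - p f)

lemma sum_mu_compat {F : Type*} [Fintype F] [DecidableEq F] (p : F → ℝ)
    (κ : Finset (F × Bool)) (hcons : Consistent κ) :
    ∑ w ∈ univ.filter (fun w => Compatible κ w), mu p w = rhoC p κ := by
  classical
  set T : Finset F := (κ.filter fun a => a.2 = true).image Prod.fst with hT
  set Fa : Finset F := (κ.filter fun a => a.2 = false).image Prod.fst with hFa
  have hmemT : ∀ f, f ∈ T ↔ (f, true) ∈ κ := by
    intro f
    constructor
    · intro hf
      rw [hT, Finset.mem_image] at hf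
      obtain ⟨⟨a, b⟩, ha, rfl⟩ := hf
      rw [Finset.mem_filter] at ha
      obtain ⟨ha, hb⟩ := ha
      simp only at hb
      subst hb; exact ha
    · intro hf
      rw [hT, Finset.mem_image]
      exact ⟨(f, true), Finset.mem_filter.2 ⟨hf, rfl⟩, rfl⟩
  have hmemF : ∀ f, f ∈ Fa ↔ (f, false) ∈ κ := by
    intro f
    constructor
    · intro hf
      rw [hFa, Finset.mem_image] at hf
      obtain ⟨⟨a, b⟩, ha, rfl⟩ := hf
      rw [Finset.mem_filter] at ha
      obtain ⟨ha, hb⟩ := ha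
      simp only at hb
      subst hb; exact ha
    · intro hf
      rw [hFa, Finset.mem_image]
      exact ⟨(f, false), Finset.mem_filter.2 ⟨hf, rfl⟩, rfl⟩
  have hdisjTF : Disjoint T Fa := by
    rw [Finset.disjoint_left]
    intro f hfT hfF
    exact hcons f ⟨(hmemT f).1 hfT, (hmemF f).1 hfF⟩
  have hcompat : ∀ w : Finset F, Compatible κ w ↔ T ⊆ w ∧ Disjoint w Fa := by
    intro w
    constructor
    · intro h
      refine ⟨fun f hf => (h f).1 ((hmemT f).1 hf), ?_⟩
      rw [Finset.disjoint_right]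
      intro f hfF
      exact (h f).2 ((hmemF f).1 hfF)
    · rintro ⟨h1, h2⟩ f
      refine ⟨fun hf => h1 ((hmemT f).2 hf), fun hf hw => ?_⟩
      exact (Finset.disjoint_right.1 h2 ((hmemF f).2 hf)) hw
  set U : Finset F := univ \ (T ∪ Fa) with hU
  have hdisjDU : Disjoint (T ∪ Fa) U := by
    rw [hU]; exact Finset.disjoint_sdiff
  set c : ℝ := (∏ f ∈ T, p f) * ∏ f ∈ Fa, (1 - p f) with hc
  have hsum : ∑ w ∈ univ.filter (fun w => Compatible κ w), mu p w =
      ∑ s ∈ U.powerset, c * ∏ f ∈ U, (if f ∈ s then p f else 1 - p f) := by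
    refine Finset.sum_nbij' (fun w => w \ (T ∪ Fa)) (fun s => s ∪ T) ?_ ?_ ?_ ?_ ?_
    · intro w hw
      rw [Finset.mem_powerset, hU]
      exact Finset.sdiff_subset_sdiff (Finset.subset_univ w) le_rfl
    · intro s hs
      rw [Finset.mem_powerset] at hs
      rw [Finset.mem_filter]
      refine ⟨Finset.mem_univ _, (hcompat _).2 ⟨Finset.subset_union_right, ?_⟩⟩
      rw [Finset.disjoint_union_left]
      refine ⟨?_, hdisjTF⟩
      have hsub : s ⊆ univ \ Fa := hs.trans (by
        rw [hU]; exact Finset.sdiff_subset_sdiff le_rfl Finset.subset_union_right)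
      exact Finset.disjoint_of_subset_left hsub Finset.sdiff_disjoint
    · intro w hw
      rw [Finset.mem_filter] at hw
      obtain ⟨hTw, hwFa⟩ := (hcompat w).1 hw.2
      have h1 : w \ (T ∪ Fa) = (w \ T) \ Fa := by
        ext f
        simp only [Finset.mem_sdiff, Finset.mem_union]
        tauto
      have h2 : (w \ T) \ Fa = w \ T :=
        Finset.sdiff_eq_self_iff_disjoint.2
          (Finset.disjoint_of_subset_left Finset.sdiff_subset hwFa)
      simp only [h1, h2]
      exact Finset.sdiff_union_of_subset hTw
    · intro s hs
      rw [Finset.mem_powerset] at hs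
      have hsTF : Disjoint s (T ∪ Fa) :=
        Finset.disjoint_of_subset_left hs Finset.sdiff_disjoint
      show (s ∪ T) \ (T ∪ Fa) = s
      rw [Finset.union_sdiff_distrib, Finset.sdiff_eq_self_iff_disjoint.2 hsTF,
        Finset.sdiff_eq_empty_iff_subset.2 Finset.subset_union_left, Finset.union_empty]
    · intro w hw
      rw [Finset.mem_filter] at hw
      obtain ⟨hTw, hwFa⟩ := (hcompat w).1 hw.2
      have hsplit : (univ : Finset F) = (T ∪ Fa) ∪ U := by
        rw [hU, Finset.union_sdiff_of_subset (Finset.subset_univ _)]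
      rw [mu, hsplit, Finset.prod_union hdisjDU, Finset.prod_union hdisjTF]
      congr 1
      · rw [hc]
        congr 1
        · exact Finset.prod_congr rfl fun f hf => if_pos (hTw hf)
        · exact Finset.prod_congr rfl fun f hf =>
            if_neg (Finset.disjoint_right.1 hwFa hf)
      · refine Finset.prod_congr rfl fun f hf => ?_
        have hfD : f ∉ T ∪ Fa := by
          rw [hU] at hf; exact (Finset.mem_sdiff.1 hf).2
        by_cases hfw : f ∈ w
        · rw [if_pos hfw, if_pos (Finset.mem_sdiff.2 ⟨hfw, hfD⟩)]
        · rw [if_neg hfw, if_neg (fun h => hfw (Finset.mem_sdiff.1 h).1)]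
  rw [hsum, ← Finset.mul_sum]
  have hone : ∑ s ∈ U.powerset, ∏ f ∈ U, (if f ∈ s then p f else 1 - p f) = 1 := by
    have h2 : ∀ s ∈ U.powerset, ∏ f ∈ U, (if f ∈ s then p f else 1 - p f)
        = (∏ f ∈ s, p f) * ∏ f ∈ U \ s, (1 - p f) := by
      intro s hs
      rw [Finset.mem_powerset] at hs
      rw [← Finset.prod_sdiff hs, mul_comm]
      congr 1
      · exact Finset.prod_congr rfl fun f hf => if_pos hf
      · exact Finset.prod_congr rfl fun f hf => if_neg (Finset.mem_sdiff.1 hf).2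
    rw [Finset.sum_congr rfl h2, ← Finset.prod_add]
    simp
  rw [hone, mul_one, hc, rhoC,
    ← Finset.prod_filter_mul_prod_filter_not κ (fun a => a.2 = true)]
  congr 1
  · rw [hT, Finset.prod_image ?_]
    · refine Finset.prod_congr rfl fun a ha => ?_
      rw [Finset.mem_filter] at ha
      rw [if_pos ha.2]
    · intro a ha b hb hab
      rw [Finset.mem_coe, Finset.mem_filter] at ha hb
      exact Prod.ext hab (ha.2.trans hb.2.symm)
  · have hfe : κ.filter (fun a => ¬ a.2 = true) = κ.filter (fun a => a.2 = false) := by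
      simp [Bool.not_eq_true]
    rw [hfe, hFa, Finset.prod_image ?_]
    · refine Finset.prod_congr rfl fun a ha => ?_
      rw [Finset.mem_filter] at ha
      rw [if_neg (by simp [ha.2])]
    · intro a ha b hb hab
      rw [Finset.mem_coe, Finset.mem_filter] at ha hb
      exact Prod.ext hab (ha.2.trans hb.2.symm)

theorem measure_equivalence {F : Type*} [Fintype F] [DecidableEq F]
    (p : F → ℝ) (hp : ∀ f, 0 ≤ p f ∧ p f ≤ 1)
    (K₁ K₂ : Finset (Finset (F × Bool)))
    (hc₁ : ∀ κ ∈ K₁, Consistent κ) (hc₂ : ∀ κ ∈ K₂, Consistent κ)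
    (hpi₁ : ∀ κ₁ ∈ K₁, ∀ κ₂ ∈ K₁, κ₁ ≠ κ₂ → ¬ Consistent (κ₁ ∪ κ₂))
    (hpi₂ : ∀ κ₁ ∈ K₂, ∀ κ₂ ∈ K₂, κ₁ ≠ κ₂ → ¬ Consistent (κ₁ ∪ κ₂))
    (heq : omegaK K₁ = omegaK K₂) :
    ∑ κ ∈ K₁, rhoC p κ = ∑ κ ∈ K₂, rhoC p κ := by
  classical
  have key : ∀ K : Finset (Finset (F × Bool)), (∀ κ ∈ K, Consistent κ) →
      (∀ κ₁ ∈ K, ∀ κ₂ ∈ K, κ₁ ≠ κ₂ → ¬ Consistent (κ₁ ∪ κ₂)) →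
      ∑ κ ∈ K, rhoC p κ = ∑ w ∈ univ.filter (fun w => w ∈ omegaK K), mu p w := by
    intro K hc hpi
    have hdis : (↑K : Set (Finset (F × Bool))).PairwiseDisjoint
        (fun κ => univ.filter (fun w => Compatible κ w)) := by
      intro κ₁ h1 κ₂ h2 hne
      simp only [Function.onFun]
      rw [Finset.disjoint_left]
      intro w hw1 hw2
      rw [Finset.mem_filter] at hw1 hw2
      refine hpi κ₁ h1 κ₂ h2 hne ?_
      intro f hf
      obtain ⟨ht, hfalse⟩ := hf
      rw [Finset.mem_union] at ht hfalse
      have hfw : f ∈ w := ht.elim (fun h => (hw1.2 f).1 h) (fun h => (hw2.2 f).1 h)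
      exact hfalse.elim (fun h => (hw1.2 f).2 h hfw) (fun h => (hw2.2 f).2 h hfw)
    have hbU : K.biUnion (fun κ => univ.filter (fun w => Compatible κ w)) =
        univ.filter (fun w => w ∈ omegaK K) := by
      ext w
      simp only [Finset.mem_biUnion, Finset.mem_filter, Finset.mem_univ, true_and,
        omegaK, Set.mem_setOf_eq]
    rw [← hbU, Finset.sum_biUnion hdis]
    exact Finset.sum_congr rfl fun κ hκ => (sum_mu_compat p κ (hc κ hκ)).symm
  rw [key K₁ hc₁ hpi₁, key K₂ hc₂ hpi₂, heq]
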